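/- Let d ≥ 2 be an integer and let X be a β-set of size s and rank n which is a d-core. For a β-set W of rank n_W, define Num(W) = (∏_{i=1}^{n_W}(q^i − 1))·(∏_{w > w' in W}(q^w − q^{w'})) and Den(W) = ∏_{w∈W} ∏_{j=1}^{w}(q^j − 1), polynomials in ℚ[q]. Let x₀ ∈ X with x₀ + d ∉ X, and set X_μ = (X \ {x₀}) ∪ {x₀ + d}, a β-set of rank n + d. Then B_d(Num(X_μ)) − B_d(Den(X_μ)) − B_d(Num(X)) + B_d(Den(X)) = d·( 2·(n − x₀ + #{x ∈ X : x < x₀}) + #{x ∈ X : x > x₀ and x + d ∉ X} ). -/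

import Mathlib

open Polynomial Finset

/-- `φ_d(r)`: for `r = 1` it is `1/2`; for `r ≥ 2` it is the number of integers `j` with
`1 ≤ j ≤ r / d` that are coprime to `r`. -/
noncomputable def phiD (d r : ℕ) : ℚ :=
  if r = 1 then 1 / 2
  else (((Finset.Icc 1 (r / d)).filter fun j => Nat.gcd j r = 1).card : ℚ)

/-- `B_d(f)` for `f` a rational constant times a power of `q` times a product of cyclotomic
polynomials: if `f = c·q^a·∏_{r≥1} Φ_r^{m_r}`, then `B_d(f) = 2a + Σ_r m_r·(φ(r) + d·φ_d(r))`.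
The exponents are recovered as multiplicities; since `Φ_r ∣ f` forces
`φ(r) ≤ deg f` and `r ≤ 2·φ(r)²`, the sum below captures every relevant `r`. -/
noncomputable def Bd (d : ℕ) (f : Polynomial ℚ) : ℚ :=
  2 * (multiplicity X f : ℚ) +
    ∑ r ∈ Finset.Icc 1 (2 * f.natDegree ^ 2 + 1),
      (multiplicity (cyclotomic r ℚ) f : ℚ) * ((Nat.totient r : ℚ) + d * phiD d r)

/-- The rank of a β-set `S` of size `s`: `(Σ_{x∈S} x) − s(s−1)/2`. -/
def brank (S : Finset ℕ) : ℕ := (∑ x ∈ S, x) - S.card * (S.card - 1) / 2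

/-- A β-set is an `e`-core if `x − e ∈ S` for every `x ∈ S` with `x ≥ e`. -/
def IsCore (e : ℕ) (S : Finset ℕ) : Prop := ∀ x ∈ S, e ≤ x → x - e ∈ S

/-- `Num(W) = (∏_{i=1}^{rank W}(q^i − 1))·(∏_{w > w' in W}(q^w − q^{w'}))`. -/
noncomputable def NumGL (S : Finset ℕ) : Polynomial ℚ :=
  (∏ i ∈ Finset.Icc 1 (brank S), (X ^ i - 1)) *
    ∏ w ∈ S, ∏ w' ∈ S.filter (· < w), (X ^ w - X ^ w')

/-- `Den(W) = ∏_{w∈W} ∏_{j=1}^{w}(q^j − 1)`. -/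
noncomputable def DenGL (S : Finset ℕ) : Polynomial ℚ :=
  ∏ w ∈ S, ∏ j ∈ Finset.Icc 1 w, (X ^ j - 1)

/-- For a `d`-core β-set `S` of rank `n` and an addable position `x₀` (i.e. `x₀ ∈ S`,
`x₀ + d ∉ S`), with `S_μ = (S \ {x₀}) ∪ {x₀ + d}`:
`B_d(Num(S_μ)) − B_d(Den(S_μ)) − B_d(Num(S)) + B_d(Den(S))
  = d·(2·(n − x₀ + #{x ∈ S : x < x₀}) + #{x ∈ S : x > x₀ ∧ x + d ∉ S})`. -/
lemma cycPrime {r : ℕ} (hr : 0 < r) : Prime (cyclotomic r ℚ) :=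
  (cyclotomic.irreducible_rat hr).prime

lemma cyc_dvd_cyc {r s : ℕ} (hr : 0 < r) (hs : 0 < s)
    (h : cyclotomic r ℚ ∣ cyclotomic s ℚ) : r = s := by
  have ha := Irreducible.associated_of_dvd (cyclotomic.irreducible_rat hr)
    (cyclotomic.irreducible_rat hs) h
  exact cyclotomic_injective (eq_of_monic_of_associated (cyclotomic.monic r ℚ)
    (cyclotomic.monic s ℚ) ha)

lemma emult_cyc {r m : ℕ} (hr : 0 < r) (hm : 0 < m) :
    emultiplicity (cyclotomic r ℚ) ((X : ℚ[X]) ^ m - 1) = if r ∣ m then 1 else 0 := by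
  have key : ∀ s ∈ m.divisors,
      emultiplicity (cyclotomic r ℚ) (cyclotomic s ℚ) = if s = r then (1 : ℕ∞) else 0 := by
    intro s hs
    have hs0 : 0 < s := Nat.pos_of_mem_divisors hs
    split_ifs with h
    · subst h
      exact (FiniteMultiplicity.of_not_isUnit (cycPrime hs0).not_isUnit
        (cyclotomic_ne_zero s ℚ)).emultiplicity_self
    · rw [emultiplicity_eq_zero]
      exact fun hd => h (cyc_dvd_cyc hr hs0 hd).symm
  rw [← prod_cyclotomic_eq_X_pow_sub_one hm, Finset.emultiplicity_prod (cycPrime hr),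
    Finset.sum_congr rfl key, Finset.sum_ite_eq' m.divisors r (fun _ => (1 : ℕ∞))]
  simp [Nat.mem_divisors, hm.ne']

lemma not_cyc_dvd_X_pow {r a : ℕ} (hr : 0 < r) : ¬ cyclotomic r ℚ ∣ (X : ℚ[X]) ^ a := by
  intro h
  have hX : cyclotomic r ℚ ∣ (X : ℚ[X]) := (cycPrime hr).dvd_of_dvd_pow h
  have ha := Irreducible.associated_of_dvd (cyclotomic.irreducible_rat hr)
    Polynomial.irreducible_X hX
  have heq : cyclotomic r ℚ = X :=
    eq_of_monic_of_associated (cyclotomic.monic r ℚ) monic_X ha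
  have h0 := congrArg (fun p => Polynomial.coeff p 0) heq
  simp only [coeff_X_zero] at h0
  rcases eq_or_lt_of_le (show 1 ≤ r from hr) with h1 | h2
  · rw [← h1, cyclotomic_one] at h0
    simp at h0
  · rw [cyclotomic_coeff_zero ℚ h2] at h0
    simp at h0

section BdEq
variable {ι : Type} 

lemma emult_cyc_prodform {r a : ℕ} (hr : 0 < r) (I : Finset ι) (m : ι → ℕ)
    (hm : ∀ i ∈ I, 0 < m i) :
    emultiplicity (cyclotomic r ℚ) ((X : ℚ[X]) ^ a * ∏ i ∈ I, ((X : ℚ[X]) ^ m i - 1))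
      = ((∑ i ∈ I, if r ∣ m i then 1 else 0 : ℕ) : ℕ∞) := by
  rw [emultiplicity_mul (cycPrime hr), Finset.emultiplicity_prod (cycPrime hr)]
  rw [emultiplicity_eq_zero.2 (not_cyc_dvd_X_pow hr), zero_add]
  rw [Finset.sum_congr rfl (fun i hi => emult_cyc hr (hm i hi))]
  push_cast
  exact Finset.sum_congr rfl (fun i hi => by split_ifs <;> simp)

lemma emult_X_prodform {a : ℕ} (I : Finset ι) (m : ι → ℕ)
    (hm : ∀ i ∈ I, 0 < m i) :
    emultiplicity (X : ℚ[X]) ((X : ℚ[X]) ^ a * ∏ i ∈ I, ((X : ℚ[X]) ^ m i - 1))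
      = (a : ℕ∞) := by
  rw [emultiplicity_mul Polynomial.prime_X, Finset.emultiplicity_prod Polynomial.prime_X]
  have h1 : emultiplicity (X : ℚ[X]) ((X : ℚ[X]) ^ a) = (a : ℕ∞) := by
    have hfin : FiniteMultiplicity (X : ℚ[X]) ((X : ℚ[X]) ^ a) :=
      FiniteMultiplicity.of_not_isUnit Polynomial.not_isUnit_X
        (pow_ne_zero a Polynomial.X_ne_zero)
    rw [hfin.emultiplicity_eq_multiplicity,
      multiplicity_pow_self Polynomial.X_ne_zero Polynomial.not_isUnit_X]
  have h2 : ∀ i ∈ I, emultiplicity (X : ℚ[X]) ((X : ℚ[X]) ^ m i - 1) = 0 := by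
    intro i hi
    rw [emultiplicity_eq_zero, Polynomial.X_dvd_iff]
    simp [Polynomial.coeff_X_pow, (hm i hi).ne]
  rw [h1, Finset.sum_congr rfl h2]
  simp

end BdEq

lemma phiD_sum {d m : ℕ} (hd : 2 ≤ d) (hm : 0 < m) :
    ∑ r ∈ m.divisors, phiD d r = 1 / 2 + ((m / d : ℕ) : ℚ) := by
  have h1 : (1 : ℕ) ∈ m.divisors := Nat.one_mem_divisors.2 hm.ne'
  rw [← Finset.add_sum_erase _ _ h1]
  have hphi1 : phiD d 1 = 1 / 2 := by simp [phiD]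
  rw [hphi1]
  congr 1
  -- key: card of Icc 1 (m/d) partitioned by fibers of k ↦ m / gcd k m
  have hcard : (Finset.Icc 1 (m / d)).card
      = ∑ r ∈ (m.divisors).erase 1,
          ((Finset.Icc 1 (m / d)).filter (fun k => m / Nat.gcd k m = r)).card := by
    apply Finset.card_eq_sum_card_fiberwise
    intro k hk
    simp only [Finset.mem_coe, Finset.mem_Icc] at hk ⊢
    have hk1 : 1 ≤ k := hk.1
    have hkd : k ≤ m / d := hk.2
    have hgd : Nat.gcd k m ∣ m := Nat.gcd_dvd_right k m
    have hglem : Nat.gcd k m ≤ k := Nat.le_of_dvd hk1 (Nat.gcd_dvd_left k m)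
    have hmd_lt : m / d < m := Nat.div_lt_self hm (lt_of_lt_of_le one_lt_two hd)
    have hglt : Nat.gcd k m < m := lt_of_le_of_lt (le_trans hglem hkd) hmd_lt
    have hgpos : 0 < Nat.gcd k m := Nat.gcd_pos_of_pos_left m hk1
    rw [Finset.mem_erase, Nat.mem_divisors]
    refine ⟨?_, Nat.div_dvd_of_dvd hgd, hm.ne'⟩
    intro habs
    have : m = Nat.gcd k m := by
      have := Nat.div_mul_cancel hgd
      rw [habs, one_mul] at this
      omega
    omega
  rw [Nat.card_Icc 1 (m / d)] at hcard
  have : ((m / d + 1 - 1 : ℕ) : ℚ) = ((m / d : ℕ) : ℚ) := by norm_num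
  rw [← this, hcard]
  push_cast
  apply Finset.sum_congr rfl
  intro r hr
  rw [Finset.mem_erase, Nat.mem_divisors] at hr
  obtain ⟨hr1, hrm, -⟩ := hr
  have hrpos : 0 < r := Nat.pos_of_dvd_of_pos hrm hm
  have hr2 : 2 ≤ r := by omega
  have hphir : phiD d r = (((Finset.Icc 1 (r / d)).filter fun j => Nat.gcd j r = 1).card : ℚ) := by
    simp [phiD, hr1]
  rw [hphir]
  norm_cast
  -- bijection j ↦ j * (m / r)
  set e := m / r with he
  have hmre : r * e = m := Nat.mul_div_cancel' hrm
  have hepos : 0 < e := Nat.div_pos (Nat.le_of_dvd hm hrm) hrpos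
  have hd0 : 0 < d := by omega
  have key : ∀ j : ℕ, Nat.gcd (j * e) m = e * Nat.gcd j r := by
    intro j
    rw [mul_comm j e, ← hmre, mul_comm r e, Nat.gcd_mul_left]
  have hmde : m / e = r := by rw [← hmre, Nat.mul_div_cancel r hepos]
  apply Finset.card_bij (fun j _ => j * e)
  · intro j hj
    simp only [Finset.mem_filter, Finset.mem_Icc] at hj ⊢
    obtain ⟨⟨hj1, hjrd⟩, hjcop⟩ := hj
    have hjd : j * d ≤ r := (Nat.le_div_iff_mul_le hd0).1 hjrd
    refine ⟨⟨Nat.one_le_iff_ne_zero.2 (by positivity), ?_⟩, ?_⟩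
    · rw [Nat.le_div_iff_mul_le hd0]
      calc j * e * d = j * d * e := by ring
      _ ≤ r * e := Nat.mul_le_mul_right e hjd
      _ = m := hmre
    · rw [key j, hjcop, mul_one, hmde]
  · intro j1 h1 j2 h2 heq
    exact Nat.eq_of_mul_eq_mul_right hepos heq
  · intro k hk
    simp only [Finset.mem_filter, Finset.mem_Icc] at hk
    obtain ⟨⟨hk1, hkmd⟩, hkfib⟩ := hk
    have hgd : Nat.gcd k m ∣ m := Nat.gcd_dvd_right k m
    have hge : Nat.gcd k m = e := by
      have h := Nat.div_mul_cancel hgd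
      rw [hkfib] at h
      have h2 : r * Nat.gcd k m = r * e := by rw [hmre]; omega
      exact Nat.eq_of_mul_eq_mul_left hrpos h2
    have hek : e ∣ k := hge ▸ Nat.gcd_dvd_left k m
    obtain ⟨j, rfl⟩ := hek
    refine ⟨j, ?_, mul_comm j e⟩
    simp only [Finset.mem_filter, Finset.mem_Icc]
    have hj1 : 1 ≤ j := by
      rcases Nat.eq_zero_or_pos j with h0 | h
      · exfalso; subst h0; simp at hk1
      · exact h
    have hkd : (e * j) * d ≤ m := (Nat.le_div_iff_mul_le hd0).1 hkmd
    have hjd : j * d ≤ r := by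
      have h3 : (j * d) * e ≤ r * e := by
        calc (j * d) * e = (e * j) * d := by ring
        _ ≤ m := hkd
        _ = r * e := hmre.symm
      exact Nat.le_of_mul_le_mul_right h3 hepos
    have hcop : Nat.gcd j r = 1 := by
      have h4 : e * Nat.gcd j r = e * 1 := by
        have k2 := key j
        rw [mul_comm j e] at k2
        rw [mul_one, ← k2, hge]
      exact Nat.eq_of_mul_eq_mul_left hepos h4
    exact ⟨⟨hj1, (Nat.le_div_iff_mul_le hd0).2 hjd⟩, hcop⟩

noncomputable def gQ (d m : ℕ) : ℚ := (m : ℚ) + (d : ℚ) / 2 + (d : ℚ) * ((m / d : ℕ) : ℚ)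

lemma Bd_eq {d : ℕ} (hd : 2 ≤ d) {ι : Type} (a : ℕ) (I : Finset ι) (m : ι → ℕ)
    (hm : ∀ i ∈ I, 0 < m i) :
    Bd d ((X : ℚ[X]) ^ a * ∏ i ∈ I, ((X : ℚ[X]) ^ m i - 1))
      = 2 * a + ∑ i ∈ I, gQ d (m i) := by
  classical
  set f : ℚ[X] := X ^ a * ∏ i ∈ I, ((X : ℚ[X]) ^ m i - 1) with hf
  have hfac : ∀ i ∈ I, ((X : ℚ[X]) ^ m i - 1) ≠ 0 := fun i hi => by
    have hmon : ((X : ℚ[X]) ^ m i - C 1).Monic := monic_X_pow_sub_C 1 (hm i hi).ne'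
    simpa using hmon.ne_zero
  have hf0 : f ≠ 0 := mul_ne_zero (pow_ne_zero a X_ne_zero) (Finset.prod_ne_zero_iff.2 hfac)
  have hmultX : multiplicity (X : ℚ[X]) f = a :=
    multiplicity_eq_of_emultiplicity_eq_some (emult_X_prodform I m hm)
  have hmult : ∀ r ∈ Finset.Icc 1 (2 * f.natDegree ^ 2 + 1),
      multiplicity (cyclotomic r ℚ) f = ∑ i ∈ I, if r ∣ m i then 1 else 0 := by
    intro r hr
    have hr1 : 0 < r := (Finset.mem_Icc.1 hr).1
    exact multiplicity_eq_of_emultiplicity_eq_some (emult_cyc_prodform hr1 I m hm)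
  have hmle : ∀ i ∈ I, m i ≤ 2 * f.natDegree ^ 2 + 1 := by
    intro i hi
    have hdvd : ((X : ℚ[X]) ^ m i - 1) ∣ f := Dvd.dvd.mul_left (Finset.dvd_prod_of_mem _ hi) _
    have hdeg : m i ≤ f.natDegree := by
      have h5 := Polynomial.natDegree_le_of_dvd hdvd hf0
      rwa [show ((X : ℚ[X]) ^ m i - 1) = X ^ m i - C 1 by simp,
        natDegree_X_pow_sub_C] at h5
    nlinarith [hdeg]
  rw [Bd, hmultX]
  congr 1
  have step : ∀ r ∈ Finset.Icc 1 (2 * f.natDegree ^ 2 + 1),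
      (multiplicity (cyclotomic r ℚ) f : ℚ) * ((Nat.totient r : ℚ) + d * phiD d r)
      = ∑ i ∈ I, if r ∣ m i then ((Nat.totient r : ℚ) + d * phiD d r) else 0 := by
    intro r hr
    rw [hmult r hr]
    push_cast
    rw [Finset.sum_mul]
    refine Finset.sum_congr rfl fun i hi => ?_
    split_ifs <;> simp
  rw [Finset.sum_congr rfl step, Finset.sum_comm]
  refine Finset.sum_congr rfl fun i hi => ?_
  rw [← Finset.sum_filter]
  have hset : (Finset.Icc 1 (2 * f.natDegree ^ 2 + 1)).filter (· ∣ m i) = (m i).divisors := by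
    ext r
    simp only [Finset.mem_filter, Finset.mem_Icc, Nat.mem_divisors]
    constructor
    · rintro ⟨⟨h1, h2⟩, h3⟩
      exact ⟨h3, (hm i hi).ne'⟩
    · rintro ⟨h3, -⟩
      have hrpos : 0 < r := Nat.pos_of_dvd_of_pos h3 (hm i hi)
      exact ⟨⟨hrpos, le_trans (Nat.le_of_dvd (hm i hi) h3) (hmle i hi)⟩, h3⟩
  rw [hset, Finset.sum_add_distrib, ← Finset.mul_sum, phiD_sum hd (hm i hi)]
  have htot : ∑ r ∈ (m i).divisors, ((Nat.totient r : ℚ)) = (m i : ℚ) := by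
    rw [← Nat.cast_sum]
    rw [Nat.sum_totient]
  rw [htot, gQ]
  ring

noncomputable def pairF (d : ℕ) (T : Finset ℕ) : ℚ :=
  ∑ w ∈ T, ∑ w' ∈ T.filter (· < w), (2 * (w' : ℚ) + gQ d (w - w'))

lemma Bd_DenGL {d : ℕ} (hd : 2 ≤ d) (S : Finset ℕ) :
    Bd d (DenGL S) = ∑ w ∈ S, ∑ j ∈ Finset.Icc 1 w, gQ d j := by
  have hrep : DenGL S
      = (X : ℚ[X]) ^ 0 * ∏ p ∈ S.sigma (fun w => Finset.Icc 1 w), ((X : ℚ[X]) ^ p.2 - 1) := by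
    rw [pow_zero, one_mul, Finset.prod_sigma]
    rfl
  have hpos : ∀ p ∈ S.sigma (fun w => Finset.Icc 1 w), 0 < p.2 :=
    fun p hp => (Finset.mem_Icc.1 (Finset.mem_sigma.1 hp).2).1
  rw [hrep, Bd_eq hd 0 _ _ hpos, Finset.sum_sigma]
  norm_num

lemma Bd_NumGL {d : ℕ} (hd : 2 ≤ d) (S : Finset ℕ) :
    Bd d (NumGL S) = (∑ i ∈ Finset.Icc 1 (brank S), gQ d i) + pairF d S := by
  classical
  set P := S.sigma (fun w => S.filter (· < w)) with hP
  have hplt : ∀ p ∈ P, p.2 < p.1 := fun p hp =>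
    (Finset.mem_filter.1 (Finset.mem_sigma.1 hp).2).2
  set A := ∑ p ∈ P, p.2 with hA
  have hsecond : (∏ w ∈ S, ∏ w' ∈ S.filter (· < w), ((X : ℚ[X]) ^ w - X ^ w'))
      = (X : ℚ[X]) ^ A * ∏ p ∈ P, ((X : ℚ[X]) ^ (p.1 - p.2) - 1) := by
    rw [← Finset.prod_sigma S (fun w => S.filter (· < w))
      (fun p => (X : ℚ[X]) ^ p.1 - X ^ p.2)]
    have hcongr : ∀ p ∈ P, (X : ℚ[X]) ^ p.1 - X ^ p.2
        = X ^ p.2 * ((X : ℚ[X]) ^ (p.1 - p.2) - 1) := by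
      intro p hp
      rw [mul_sub, mul_one, ← pow_add, Nat.add_sub_cancel' (le_of_lt (hplt p hp))]
    rw [Finset.prod_congr rfl hcongr, Finset.prod_mul_distrib,
      Finset.prod_pow_eq_pow_sum]
  have hrep : NumGL S = (X : ℚ[X]) ^ A *
      ∏ j ∈ (Finset.Icc 1 (brank S)).disjSum P,
        ((X : ℚ[X]) ^ (Sum.elim id (fun p : (_ : ℕ) × ℕ => p.1 - p.2) j) - 1) := by
    rw [NumGL, hsecond, Finset.prod_disjSum _ _ _]
    simp only [Sum.elim_inl, Sum.elim_inr, id_eq]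
    ring
  have hpos : ∀ j ∈ (Finset.Icc 1 (brank S)).disjSum P,
      0 < Sum.elim id (fun p : (_ : ℕ) × ℕ => p.1 - p.2) j := by
    intro j hj
    rcases j with i | p
    · simpa using Nat.succ_le_iff.1 (Finset.mem_Icc.1 (Finset.inl_mem_disjSum.1 hj)).1
    · simpa using Nat.sub_pos_of_lt (hplt p (Finset.inr_mem_disjSum.1 hj))
  rw [hrep, Bd_eq hd A _ _ hpos, Finset.sum_disjSum _ _ _]
  have hpf : pairF d S = 2 * (A : ℚ) + ∑ p ∈ P, gQ d (p.1 - p.2) := by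
    rw [pairF, ← Finset.sum_sigma S (fun w => S.filter (· < w))
      (fun p => 2 * ((p.2 : ℕ) : ℚ) + gQ d (p.1 - p.2))]
    rw [Finset.sum_add_distrib, hA]
    push_cast
    rw [Finset.mul_sum]
  rw [hpf]
  simp only [Sum.elim_inl, Sum.elim_inr, id_eq]
  ring

lemma pairF_insert {d : ℕ} {T : Finset ℕ} {x : ℕ} (hx : x ∉ T) :
    pairF d (insert x T) = pairF d T
      + ∑ y ∈ T.filter (· < x), (2 * (y : ℚ) + gQ d (x - y))
      + ∑ y ∈ T.filter (x < ·), (2 * (x : ℚ) + gQ d (y - x)) := by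
  classical
  rw [pairF, Finset.sum_insert hx]
  have h1 : (insert x T).filter (· < x) = T.filter (· < x) := by
    rw [Finset.filter_insert, if_neg (lt_irrefl x)]
  have h2 : ∀ w ∈ T, ∑ w' ∈ (insert x T).filter (· < w), (2 * (w' : ℚ) + gQ d (w - w'))
      = (∑ w' ∈ T.filter (· < w), (2 * (w' : ℚ) + gQ d (w - w')))
        + (if x < w then 2 * (x : ℚ) + gQ d (w - x) else 0) := by
    intro w hw
    rw [Finset.filter_insert]
    split_ifs with h
    · rw [Finset.sum_insert (fun hmem => hx (Finset.mem_of_mem_filter x hmem))]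
      ring
    · ring
  have h5 : ∑ w ∈ T, ((∑ w' ∈ T.filter (· < w), (2 * (w' : ℚ) + gQ d (w - w')))
        + (if x < w then 2 * (x : ℚ) + gQ d (w - x) else 0))
      = pairF d T + ∑ y ∈ T.filter (x < ·), (2 * (x : ℚ) + gQ d (y - x)) := by
    rw [Finset.sum_add_distrib, ← Finset.sum_filter, pairF]
  rw [h1, Finset.sum_congr rfl h2, h5]
  ring

lemma gQ_add_d {d : ℕ} (hd : 0 < d) (m : ℕ) : gQ d (m + d) = gQ d m + 2 * d := by
  rw [gQ, gQ, Nat.add_div_right m hd]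
  push_cast
  ring

lemma gQ_small {d m : ℕ} (hm : m < d) : gQ d m = m + (d : ℚ) / 2 := by
  rw [gQ, Nat.div_eq_of_lt hm]
  push_cast
  ring

lemma window_sum {d : ℕ} (hd : 0 < d) (a : ℕ) :
    ∑ j ∈ Finset.Ioc a (a + d), gQ d j = (∑ j ∈ Finset.Ioc 0 d, gQ d j) + 2 * d * a := by
  induction a with
  | zero => simp
  | succ a ih =>
    have h1 : ∑ j ∈ Finset.Ioc a (a + d + 1), gQ d j
        = (∑ j ∈ Finset.Ioc a (a + d), gQ d j) + gQ d (a + d + 1) :=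
      Finset.sum_Ioc_succ_top (by omega) _
    have h2 : ∑ j ∈ Finset.Ioc a (a + d + 1), gQ d j
        = (∑ j ∈ Finset.Ioc a (a + 1), gQ d j) + ∑ j ∈ Finset.Ioc (a + 1) (a + d + 1), gQ d j :=
      (Finset.sum_Ioc_consecutive _ (by omega) (by omega)).symm
    have h3 : ∑ j ∈ Finset.Ioc a (a + 1), gQ d j = gQ d (a + 1) := by
      rw [Nat.Ioc_succ_singleton, Finset.sum_singleton]
    have h4 : gQ d (a + d + 1) = gQ d (a + 1) + 2 * d := by
      rw [show a + d + 1 = (a + 1) + d by omega, gQ_add_d hd]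
    have heq : a + 1 + d = a + d + 1 := by omega
    rw [heq]
    rw [ih] at h1
    rw [h3] at h2
    push_cast
    linarith [h1, h2, h4]

lemma two_sum_ge (T : Finset ℕ) : T.card * (T.card - 1) ≤ 2 * ∑ x ∈ T, x := by
  classical
  induction T using Finset.induction_on_max with
  | empty => simp
  | insert M T hM ih =>
    have hsub : T ⊆ Finset.range M := fun y hy => Finset.mem_range.2 (hM y hy)
    have hcard : T.card ≤ M := by
      have := Finset.card_le_card hsub
      simpa using this
    have hnotmem : M ∉ T := fun h => lt_irrefl M (hM M h)
    rw [Finset.sum_insert hnotmem, Finset.card_insert_of_notMem hnotmem]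
    rcases Nat.eq_zero_or_pos T.card with h0 | hpos
    · simp [h0]
    · have h1 : (T.card + 1) * (T.card + 1 - 1) = T.card * (T.card - 1) + 2 * T.card := by
        obtain ⟨c, hc⟩ := Nat.exists_eq_succ_of_ne_zero hpos.ne'
        rw [hc]
        simp only [Nat.succ_eq_add_one, Nat.add_sub_cancel]
        ring
      omega

lemma brank_insert_erase {d : ℕ} (S : Finset ℕ) (x0 : ℕ) (hx0 : x0 ∈ S)
    (hx0d : x0 + d ∉ S) : brank (insert (x0 + d) (S.erase x0)) = brank S + d := by
  classical
  have hxE : x0 + d ∉ S.erase x0 := fun h => hx0d (Finset.mem_of_mem_erase h)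
  have hsumE : x0 + ∑ x ∈ S.erase x0, x = ∑ x ∈ S, x := Finset.add_sum_erase S id hx0
  have hsum : ∑ x ∈ insert (x0 + d) (S.erase x0), x = (∑ x ∈ S, x) + d := by
    rw [Finset.sum_insert hxE]
    omega
  have hcard : (insert (x0 + d) (S.erase x0)).card = S.card := by
    rw [Finset.card_insert_of_notMem hxE, Finset.card_erase_of_mem hx0]
    have : 1 ≤ S.card := Finset.card_pos.2 ⟨x0, hx0⟩
    omega
  have hge := two_sum_ge S
  have hge2 : S.card * (S.card - 1) / 2 ≤ ∑ x ∈ S, x := by omega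
  rw [brank, brank, hsum, hcard]
  omega


lemma chain_down {d : ℕ} {S : Finset ℕ} (hS : IsCore d S) {x : ℕ} (hx : x ∈ S) :
    ∀ k, k * d ≤ x → x - k * d ∈ S := by
  intro k
  induction k with
  | zero => simpa using hx
  | succ k ih =>
    intro hk
    have hmul : (k + 1) * d = k * d + d := by ring
    have h1 : k * d ≤ x := by omega
    have h2 := ih h1
    have h3 : d ≤ x - k * d := by omega
    have h4 := hS _ h2 h3
    have h5 : x - k * d - d = x - (k + 1) * d := by omega
    rwa [h5] at h4

lemma up_clear {d : ℕ} {S : Finset ℕ} (hS : IsCore d S) {x : ℕ} (k : ℕ)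
    (hnd : x + d ∉ S) (hmem : x + d + k * d ∈ S) : False := by
  apply hnd
  have h := chain_down hS hmem k (by omega)
  rwa [Nat.add_sub_cancel] at h

lemma core_count {d : ℕ} (hd : 0 < d) {S : Finset ℕ} (hS : IsCore d S) {x0 : ℕ}
    (hx0 : x0 ∈ S) (hx0d : x0 + d ∉ S) :
    (S.filter fun x => x0 < x ∧ x + d ∉ S).card
      = (S.filter fun y => x0 < y ∧ y < x0 + d).card := by
  classical
  apply Finset.card_bij (fun x _ => x - ((x - x0 - 1) / d) * d)
  · -- maps to
    intro x hx
    simp only [Finset.mem_filter] at hx ⊢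
    obtain ⟨hxS, hxgt, hxd⟩ := hx
    set q := (x - x0 - 1) / d with hq
    have hdm : q * d + (x - x0 - 1) % d = x - x0 - 1 := by
      rw [mul_comm]; exact Nat.div_add_mod _ d
    have hml := Nat.mod_lt (x - x0 - 1) hd
    have hqle : q * d ≤ x := by omega
    have hmem : x - q * d ∈ S := chain_down hS hxS q hqle
    have hne : x - q * d ≠ x0 + d := fun h => hx0d (h ▸ hmem)
    exact ⟨hmem, by omega, by omega⟩
  · -- injective
    intro x1 hx1 x2 hx2 heq
    simp only [Finset.mem_filter] at hx1 hx2
    obtain ⟨h1S, h1gt, h1d⟩ := hx1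
    obtain ⟨h2S, h2gt, h2d⟩ := hx2
    set q1 := (x1 - x0 - 1) / d with hq1
    set q2 := (x2 - x0 - 1) / d with hq2
    have hdm1 : q1 * d + (x1 - x0 - 1) % d = x1 - x0 - 1 := by
      rw [mul_comm]; exact Nat.div_add_mod _ d
    have hdm2 : q2 * d + (x2 - x0 - 1) % d = x2 - x0 - 1 := by
      rw [mul_comm]; exact Nat.div_add_mod _ d
    have hml1 := Nat.mod_lt (x1 - x0 - 1) hd
    have hml2 := Nat.mod_lt (x2 - x0 - 1) hd
    rcases lt_trichotomy q1 q2 with h | h | h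
    · exfalso
      obtain ⟨k, hk⟩ := Nat.exists_eq_add_of_lt h
      have hmul : q2 * d = q1 * d + k * d + d := by rw [hk]; ring
      have hx2eq : x2 = x1 + d + k * d := by omega
      exact up_clear hS k h1d (hx2eq ▸ h2S)
    · have : q1 * d = q2 * d := by rw [h]
      omega
    · exfalso
      obtain ⟨k, hk⟩ := Nat.exists_eq_add_of_lt h
      have hmul : q1 * d = q2 * d + k * d + d := by rw [hk]; ring
      have hx1eq : x1 = x2 + d + k * d := by omega
      exact up_clear hS k h2d (hx1eq ▸ h1S)
  · -- surjective
    intro y hy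
    simp only [Finset.mem_filter] at hy
    obtain ⟨hyS, hygt, hylt⟩ := hy
    have hex : ∃ k, y + k * d ∉ S := by
      refine ⟨S.max' ⟨y, hyS⟩ + 1, fun hmem => ?_⟩
      have h1 := Finset.le_max' S _ hmem
      have h2 : S.max' ⟨y, hyS⟩ + 1 ≤ (S.max' ⟨y, hyS⟩ + 1) * d :=
        Nat.le_mul_of_pos_right _ hd
      omega
    have hspec : y + Nat.find hex * d ∉ S := Nat.find_spec hex
    have hk0pos : 0 < Nat.find hex := by
      rcases Nat.eq_zero_or_pos (Nat.find hex) with h0 | h; swap; · exact h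
      exfalso; apply hspec; rw [h0]; simpa using hyS
    obtain ⟨c, hc⟩ : ∃ c, Nat.find hex = c + 1 := ⟨Nat.find hex - 1, by omega⟩
    have hcS : y + c * d ∈ S := by
      by_contra hcon
      have := Nat.find_min hex (show c < Nat.find hex by omega)
      exact this hcon
    have hcd : y + c * d + d ∉ S := by
      have heq2 : y + c * d + d = y + Nat.find hex * d := by rw [hc]; ring
      rwa [heq2]
    refine ⟨y + c * d, ?_, ?_⟩
    · simp only [Finset.mem_filter]
      exact ⟨hcS, by omega, hcd⟩
    · have hlt : y - x0 - 1 < d := by omega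
      have hdivq : (y + c * d - x0 - 1) / d = c := by
        have h1 : y + c * d - x0 - 1 = (y - x0 - 1) + c * d := by omega
        rw [h1, Nat.add_mul_div_right _ _ hd, Nat.div_eq_of_lt hlt, zero_add]
      rw [hdivq]
      omega

theorem Bd_addHook_GL (d : ℕ) (hd : 2 ≤ d) (S : Finset ℕ) (hS : IsCore d S)
    (x0 : ℕ) (hx0 : x0 ∈ S) (hx0d : x0 + d ∉ S) :
    Bd d (NumGL (insert (x0 + d) (S.erase x0))) - Bd d (DenGL (insert (x0 + d) (S.erase x0)))
      - Bd d (NumGL S) + Bd d (DenGL S)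
    = d * (2 * ((brank S : ℚ) - (x0 : ℚ) + ((S.filter (· < x0)).card : ℚ))
        + ((S.filter fun x => x0 < x ∧ x + d ∉ S).card : ℚ)) := by
  classical
  have hd0 : 0 < d := by omega
  set E := S.erase x0 with hE
  have hxE : x0 + d ∉ E := fun h => hx0d (Finset.mem_of_mem_erase h)
  have hx0E : x0 ∉ E := Finset.notMem_erase x0 S
  have hSE : S = insert x0 E := (Finset.insert_erase hx0).symm
  set n := brank S with hn
  have hbr : brank (insert (x0 + d) E) = n + d := brank_insert_erase S x0 hx0 hx0d
  -- Numerator parts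
  rw [Bd_NumGL hd, Bd_NumGL hd, Bd_DenGL hd, Bd_DenGL hd, hbr]
  -- Icc sums split
  have hIcc : ∀ a : ℕ, ∑ i ∈ Finset.Icc 1 (a + d), gQ d i
      = (∑ i ∈ Finset.Icc 1 a, gQ d i) + ∑ i ∈ Finset.Ioc a (a + d), gQ d i := by
    intro a
    rw [show (1 : ℕ) = 0 + 1 from rfl, Finset.Icc_add_one_left_eq_Ioc, Finset.Icc_add_one_left_eq_Ioc,
      Finset.sum_Ioc_consecutive _ (Nat.zero_le a) (Nat.le_add_right a d)]
  -- Den sums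
  have hDen : (∑ w ∈ insert (x0 + d) E, ∑ j ∈ Finset.Icc 1 w, gQ d j)
      = (∑ w ∈ S, ∑ j ∈ Finset.Icc 1 w, gQ d j)
        + ∑ j ∈ Finset.Ioc x0 (x0 + d), gQ d j := by
    rw [Finset.sum_insert hxE,
      show (∑ w ∈ S, ∑ j ∈ Finset.Icc 1 w, gQ d j)
        = ∑ w ∈ insert x0 E, ∑ j ∈ Finset.Icc 1 w, gQ d j by rw [← hSE],
      Finset.sum_insert hx0E, hIcc x0]
    ring
  -- pair part
  have hpair : pairF d (insert (x0 + d) E) - pairF d S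
      = 2 * (d : ℚ) * ((S.filter (· < x0)).card : ℚ)
        + (d : ℚ) * ((S.filter fun y => x0 < y ∧ y < x0 + d).card : ℚ) := by
    rw [show pairF d S = pairF d (insert x0 E) by rw [← hSE],
      pairF_insert hxE, pairF_insert hx0E]
    have comb : ∀ f g h k : ℕ → ℚ,
        (pairF d E + (∑ y ∈ E, f y) + ∑ y ∈ E, g y)
          - (pairF d E + (∑ y ∈ E, h y) + ∑ y ∈ E, k y)
        = ∑ y ∈ E, (f y + g y - h y - k y) := by
      intro f g h k
      rw [Finset.sum_sub_distrib, Finset.sum_sub_distrib, Finset.sum_add_distrib]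
      ring
    rw [Finset.sum_filter, Finset.sum_filter, Finset.sum_filter, Finset.sum_filter, comb]
    have hterm : ∀ y ∈ E,
        ((if y < x0 + d then 2 * (y : ℚ) + gQ d (x0 + d - y) else 0)
          + (if x0 + d < y then 2 * ((x0 + d : ℕ) : ℚ) + gQ d (y - (x0 + d)) else 0)
          - (if y < x0 then 2 * (y : ℚ) + gQ d (x0 - y) else 0)
          - (if x0 < y then 2 * (x0 : ℚ) + gQ d (y - x0) else 0))
        = (if y < x0 then 2 * (d : ℚ) else 0)
          + (if x0 < y ∧ y < x0 + d then (d : ℚ) else 0) := by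
      intro y hy
      have hyx0 : y ≠ x0 := Finset.ne_of_mem_erase hy
      have hyxd : y ≠ x0 + d := fun h => hxE (h ▸ hy)
      rcases lt_trichotomy y x0 with h1 | h1 | h1
      · have e1 : x0 + d - y = (x0 - y) + d := by omega
        rw [if_pos (by omega), if_neg (by omega), if_pos h1, if_neg (by omega),
          if_pos h1, if_neg (by omega), e1, gQ_add_d hd0]
        ring
      · omega
      · rcases lt_trichotomy y (x0 + d) with h2 | h2 | h2
        · have e1 : x0 + d - y < d := by omega
          have e2 : y - x0 < d := by omega
          rw [if_pos h2, if_neg (by omega), if_neg (by omega), if_pos h1,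
            if_neg (by omega), if_pos ⟨h1, h2⟩, gQ_small e1, gQ_small e2]
          have c1 : ((x0 + d - y : ℕ) : ℚ) = (x0 : ℚ) + d - y := by
            push_cast [Nat.cast_sub (le_of_lt h2)]; ring
          have c2 : ((y - x0 : ℕ) : ℚ) = (y : ℚ) - x0 := by
            push_cast [Nat.cast_sub (le_of_lt h1)]; ring
          rw [c1, c2]
          ring
        · omega
        · have e1 : y - x0 = (y - (x0 + d)) + d := by omega
          rw [if_neg (by omega), if_pos h2, if_neg (by omega), if_pos h1,
            if_neg (by omega), if_neg (show ¬(x0 < y ∧ y < x0 + d) by omega),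
            e1, gQ_add_d hd0]
          push_cast
          ring
    rw [Finset.sum_congr rfl hterm, Finset.sum_add_distrib, ← Finset.sum_filter,
      ← Finset.sum_filter, Finset.sum_const, Finset.sum_const]
    have hf1 : E.filter (· < x0) = S.filter (· < x0) := by
      rw [hE, Finset.filter_erase, Finset.erase_eq_of_notMem]
      simp
    have hf2 : E.filter (fun y => x0 < y ∧ y < x0 + d)
        = S.filter (fun y => x0 < y ∧ y < x0 + d) := by
      rw [hE, Finset.filter_erase, Finset.erase_eq_of_notMem]
      simp
    rw [hf1, hf2]
    simp only [nsmul_eq_mul]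
    ring
  -- window sums
  have hw1 := window_sum hd0 n
  have hw2 := window_sum hd0 x0
  have hcc := core_count hd0 hS hx0 hx0d
  rw [hIcc n, hcc, ← hn]
  push_cast
  linarith [hw1, hw2, hDen, hpair]
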